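/- arXiv:2104.04804 — 2 statements merged into one kernel-verified Lean document; each statement's English description precedes it below -/
import Mathlib

section
/- With notation as above, let $j^1_xh \in J^1\mathfrak G$ and $j^1_xg \in K^1\mathfrak G$ (so $g(x) = \mathfrak e_x$). Then $\iota(j^1_xh\cdot j^1_xg\cdot j^1_x h^{-1}) = \mathrm{Adj}_{h(x)} \circ \iota(j^1_xg)$, where $\mathrm{Adj}_{h(x)}$ is the adjoint action of $h(x) \in \mathfrak G_x$ on $\mathrm{Lie}(\mathfrak G_x)$. -/
open Manifold Set Filter

/-- Conjugation on jets: for a jet `j¹_x h ∈ J¹𝔾` and a kernel jet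
`j¹_x g ∈ K¹𝔾` (so `g x = e x`),
`ι (j¹_x h · j¹_x g · j¹_x h⁻¹) = Adj_{h x} ∘ ι (j¹_x g)`, where `Adj_{h x}` is the
adjoint action of `h x ∈ 𝔾_x` on `Lie(𝔾_x)`, i.e. the differential at `e x` of the
conjugation `k ↦ (h x) · k · (h x)⁻¹`, and `ι (j¹_x g) = d_x g - d_x e`. -/
theorem jet_conjugation_is_adjoint
    {EM : Type*} [NormedAddCommGroup EM] [NormedSpace ℝ EM]
    {HM : Type*} [TopologicalSpace HM] {IM : ModelWithCorners ℝ EM HM}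
    {M : Type*} [TopologicalSpace M] [ChartedSpace HM M] [IsManifold IM (⊤ : ℕ∞) M]
    {EG : Type*} [NormedAddCommGroup EG] [NormedSpace ℝ EG]
    {HG : Type*} [TopologicalSpace HG] {IG : ModelWithCorners ℝ EG HG}
    {𝔾 : Type*} [TopologicalSpace 𝔾] [ChartedSpace HG 𝔾] [IsManifold IG (⊤ : ℕ∞) 𝔾]
    (π : 𝔾 → M) (hπ : ContMDiff IG IM (⊤ : ℕ∞) π)
    (hsub : ∀ g : 𝔾, Function.Surjective (mfderiv IG IM π g))
    (m : 𝔾 → 𝔾 → 𝔾) (i : 𝔾 → 𝔾) (e : M → 𝔾)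
    (hm : ContMDiff (IG.prod IG) IG (⊤ : ℕ∞) (Function.uncurry m))
    (hi : ContMDiff IG IG (⊤ : ℕ∞) i) (he : ContMDiff IM IG (⊤ : ℕ∞) e)
    (hπe : ∀ x : M, π (e x) = x)
    (hπm : ∀ g h : 𝔾, π g = π h → π (m g h) = π g)
    (hπi : ∀ g : 𝔾, π (i g) = π g)
    (hassoc : ∀ g h k : 𝔾, π g = π h → π h = π k → m (m g h) k = m g (m h k))
    (hone : ∀ g : 𝔾, m (e (π g)) g = g ∧ m g (e (π g)) = g)
    (hinv : ∀ g : 𝔾, m g (i g) = e (π g) ∧ m (i g) g = e (π g))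
    (x : M) (h g : M → 𝔾)
    (hh : ContMDiffAt IM IG (⊤ : ℕ∞) h x) (hg : ContMDiffAt IM IG (⊤ : ℕ∞) g x)
    (hhs : ∀ᶠ y in nhds x, π (h y) = y) (hgs : ∀ᶠ y in nhds x, π (g y) = y)
    (hgx : g x = e x) :
    ∀ v : TangentSpace IM x,
      id (α := EG) (mfderiv IM IG (fun y => m (m (h y) (g y)) (i (h y))) x v) -
          id (α := EG) (mfderiv IM IG e x v) =
        id (α := EG)
          ((mfderiv IG IG (fun k => m (m (h x) k) (i (h x))) (e x))
            (id (α := TangentSpace IG (e x))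
              (id (α := EG) (mfderiv IM IG g x v) -
                id (α := EG) (mfderiv IM IG e x v)))) := by
  intro v
  -- the two-variable map F (y, k) = m (m (h y) k) (i (h y))
  set F : M × 𝔾 → 𝔾 := fun p => m (m (h p.1) p.2) (i (h p.1)) with hF_def
  have hFs : ContMDiffAt (IM.prod IG) IG (⊤ : ℕ∞) F (x, e x) := by
    have h1 : ContMDiffAt (IM.prod IG) IG (⊤ : ℕ∞) (fun p : M × 𝔾 => h p.1) (x, e x) :=
      ContMDiffAt.comp (I' := IM) (x, e x) hh contMDiffAt_fst
    have h2 : ContMDiffAt (IM.prod IG) IG (⊤ : ℕ∞) (fun p : M × 𝔾 => m (h p.1) p.2) (x, e x) :=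
      ContMDiffAt.comp (I' := IG.prod IG) (x, e x) (hm.contMDiffAt)
        (h1.prodMk contMDiffAt_snd)
    have h3 : ContMDiffAt (IM.prod IG) IG (⊤ : ℕ∞) (fun p : M × 𝔾 => i (h p.1)) (x, e x) :=
      ContMDiffAt.comp (I' := IG) (x, e x) (hi.contMDiffAt) h1
    exact ContMDiffAt.comp (I' := IG.prod IG) (x, e x) (hm.contMDiffAt)
      (h2.prodMk h3)
  have hFd : MDifferentiableAt (IM.prod IG) IG F (x, e x) := hFs.mdifferentiableAt (by simp)
  have hgd : MDifferentiableAt IM IG g x := hg.mdifferentiableAt (by simp)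
  have hed : MDifferentiableAt IM IG e x := he.contMDiffAt.mdifferentiableAt (by simp)
  set DF := mfderiv (IM.prod IG) IG F (x, e x) with hDF_def
  have hφgd : MDifferentiableAt IM (IM.prod IG) (fun y => (y, g y)) x :=
    mdifferentiableAt_id.prodMk hgd
  have hφed : MDifferentiableAt IM (IM.prod IG) (fun y => (y, e y)) x :=
    mdifferentiableAt_id.prodMk hed
  have hFd' : MDifferentiableAt (IM.prod IG) IG F ((fun y => (y, g y)) x) := by
    simpa [hgx] using hFd
  have h2g : mfderiv IM (IM.prod IG) (fun y => (y, g y)) x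
      = (ContinuousLinearMap.id ℝ EM).prod (mfderiv IM IG g x) := by
    have h2 := mdifferentiableAt_id.mfderiv_prod (I' := IM) hgd
    rw [mfderiv_id] at h2
    exact h2
  have h2e : mfderiv IM (IM.prod IG) (fun y => (y, e y)) x
      = (ContinuousLinearMap.id ℝ EM).prod (mfderiv IM IG e x) := by
    have h2 := mdifferentiableAt_id.mfderiv_prod (I' := IM) hed
    rw [mfderiv_id] at h2
    exact h2
  have hA : mfderiv IM IG (fun y => F (y, g y)) x
      = DF.comp ((ContinuousLinearMap.id ℝ EM).prod (mfderiv IM IG g x)) := by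
    have h1 : mfderiv IM IG (fun y => F (y, g y)) x
        = (mfderiv (IM.prod IG) IG F (x, g x)).comp
            (mfderiv IM (IM.prod IG) (fun y => (y, g y)) x) :=
      mfderiv_comp (I' := IM.prod IG) x hFd' hφgd
    rw [h2g, hgx] at h1
    exact h1
  have hB : mfderiv IM IG (fun y => F (y, e y)) x
      = DF.comp ((ContinuousLinearMap.id ℝ EM).prod (mfderiv IM IG e x)) := by
    have h1 : mfderiv IM IG (fun y => F (y, e y)) x
        = (mfderiv (IM.prod IG) IG F (x, e x)).comp
            (mfderiv IM (IM.prod IG) (fun y => (y, e y)) x) :=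
      mfderiv_comp (I' := IM.prod IG) x hFd hφed
    rw [h2e] at h1
    exact h1
  -- F (y, e y) = e y near x
  have hBe : (fun y => F (y, e y)) =ᶠ[nhds x] e := by
    filter_upwards [hhs] with y hy
    show m (m (h y) (e y)) (i (h y)) = e y
    have e1 : e y = e (π (h y)) := by rw [hy]
    rw [e1, (hone (h y)).2, (hinv (h y)).1, hy]
  have hBe' : mfderiv IM IG (fun y => F (y, e y)) x = mfderiv IM IG e x :=
    hBe.mfderiv_eq
  -- derivative of the conjugation k ↦ F (x, k)
  have hC : mfderiv IG IG (fun k => F (x, k)) (e x)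
      = DF.comp ((ContinuousLinearMap.inr ℝ EM EG)) := by
    have h1 : mfderiv IG IG (fun k => F (x, k)) (e x)
        = (mfderiv (IM.prod IG) IG F (x, e x)).comp
            (mfderiv IG (IM.prod IG) (fun k => (x, k)) (e x)) :=
      mfderiv_comp (I' := IM.prod IG) (e x) hFd
        (mdifferentiableAt_const.prodMk mdifferentiableAt_id)
    rw [mfderiv_prod_right] at h1
    exact h1
  -- assemble
  have key1 : mfderiv IM IG (fun y => m (m (h y) (g y)) (i (h y))) x v
      = DF (v, mfderiv IM IG g x v) := by
    have heq : (fun y => m (m (h y) (g y)) (i (h y))) = fun y => F (y, g y) := rfl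
    rw [heq, hA]; rfl
  have key2 : mfderiv IM IG e x v = DF (v, mfderiv IM IG e x v) := by
    conv_lhs => rw [← hBe', hB]
    rfl
  have key3 : ∀ w : EG,
      mfderiv IG IG (fun k => m (m (h x) k) (i (h x))) (e x) w = DF (0, w) := by
    intro w
    have heq : (fun k => m (m (h x) k) (i (h x))) = fun k => F (x, k) := rfl
    rw [heq, hC]; rfl
  dsimp only [id]
  rw [key1, key3 _]
  conv_lhs => rw [key2]
  have hgoal : ∀ (a b : EG) (vv : EM), DF (vv, a) - DF (vv, b) = DF (0, a - b) := by
    intro a b vv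
    refine (DF.map_sub (vv, a) (vv, b)).symm.trans ?_
    congr 1
    show ((vv, a) : EM × EG) - (vv, b) = (0, a - b)
    simp [Prod.ext_iff]
  exact hgoal _ _ _
end

section
/- Let $\sigma$ and $\tilde\sigma$ be the jet-bundle sections of two group connections on a group bundle $\mathfrak G\to M$ (so $\sigma,\tilde\sigma\colon\mathfrak G\to J^1\mathfrak G$ are group bundle morphisms splitting $\pi_{1,0}$). Then for every $x\in M$ and $\vec X \in T_xM$, the map $g \mapsto \iota(\sigma(g)\tilde\sigma(g)^{-1})(\vec X)$ from $\mathfrak G_x$ to $\mathrm{Lie}(\mathfrak G_x)$ is a $1$-cocycle for the adjoint representation: for $g,h\in\mathfrak G_x$, $\theta(gh)(\vec X) = \theta(g)(\vec X) + \mathrm{Adj}_g(\theta(h)(\vec X))$, where $\theta(g) = \iota(\sigma(g)\tilde\sigma(g)^{-1})$. -/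
open Manifold Set Filter

/-- In each fiber of a group bundle, the classical cocycle rearrangement identity
`(a*b)*(a'*b')⁻¹ = (a*a'⁻¹) * ((a' * (b*b'⁻¹)) * a'⁻¹)` holds.  We prove it by endowing
the fiber with a group structure and invoking the `group` tactic. -/
private lemma fiber_group_identity {𝔾 M : Type*} (π : 𝔾 → M)
    (m : 𝔾 → 𝔾 → 𝔾) (i : 𝔾 → 𝔾) (e : M → 𝔾)
    (hπe : ∀ x : M, π (e x) = x)
    (hπm : ∀ g h : 𝔾, π g = π h → π (m g h) = π g)
    (hπi : ∀ g : 𝔾, π (i g) = π g)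
    (hassoc : ∀ g h k : 𝔾, π g = π h → π h = π k → m (m g h) k = m g (m h k))
    (hone : ∀ g : 𝔾, m (e (π g)) g = g ∧ m g (e (π g)) = g)
    (hinv : ∀ g : 𝔾, m g (i g) = e (π g) ∧ m (i g) g = e (π g))
    (y : M) (a b a' b' : 𝔾) (ha : π a = y) (hb : π b = y) (ha' : π a' = y) (hb' : π b' = y) :
    m (m a b) (i (m a' b')) =
      m (m a (i a')) (m (m a' (m b (i b'))) (i a')) := by
  letI : Mul {g : 𝔾 // π g = y} :=
    ⟨fun u v => ⟨m u.1 v.1, by rw [hπm u.1 v.1 (u.2.trans v.2.symm)]; exact u.2⟩⟩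
  letI : One {g : 𝔾 // π g = y} := ⟨⟨e y, hπe y⟩⟩
  letI : Inv {g : 𝔾 // π g = y} := ⟨fun u => ⟨i u.1, (hπi u.1).trans u.2⟩⟩
  letI : Group {g : 𝔾 // π g = y} := by
    refine Group.ofLeftAxioms (fun u v w => Subtype.ext ?_) (fun u => Subtype.ext ?_)
      (fun u => Subtype.ext ?_)
    · exact hassoc u.1 v.1 w.1 (u.2.trans v.2.symm) (v.2.trans w.2.symm)
    · show m (e y) u.1 = u.1
      have hy : e y = e (π u.1) := by rw [u.2]
      rw [hy]; exact (hone u.1).1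
    · show m (i u.1) u.1 = e y
      have hy : e y = e (π u.1) := by rw [u.2]
      rw [hy]; exact (hinv u.1).2
  have key : (⟨a, ha⟩ * ⟨b, hb⟩ : {g : 𝔾 // π g = y}) *
        ((⟨a', ha'⟩ : {g : 𝔾 // π g = y}) * ⟨b', hb'⟩)⁻¹
      = ((⟨a, ha⟩ : {g : 𝔾 // π g = y}) * (⟨a', ha'⟩ : {g : 𝔾 // π g = y})⁻¹) *
        (((⟨a', ha'⟩ : {g : 𝔾 // π g = y}) *
            ((⟨b, hb⟩ : {g : 𝔾 // π g = y}) * (⟨b', hb'⟩ : {g : 𝔾 // π g = y})⁻¹)) *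
          (⟨a', ha'⟩ : {g : 𝔾 // π g = y})⁻¹) := by
    group
  exact congrArg Subtype.val key

/-- Let `σ` and `σ'` be the jet-bundle sections of two group connections
on a group bundle `𝔾 → M` (group bundle morphisms splitting `π₁₀ : J¹𝔾 → 𝔾`).  Jets are
represented by local sections: `σ g = j¹_x s_g` with `s_g x = g`, and the morphism
property of `σ` says `j¹_x (s_g · s_h) = j¹_x s_{gh}`.  The difference
`θ(g) = ι (σ(g) · σ'(g)⁻¹) = d_x (s_g · (s'_g)⁻¹) - d_x e` is, in each direction
`v ∈ T_x M`, a `1`-cocycle of `𝔾_x` with values in `Lie(𝔾_x)` for the adjoint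
representation: `θ(g·h)(v) = θ(g)(v) + Adj_g (θ(h)(v))`. -/
theorem difference_of_group_connections_is_cocycle
    {EM : Type*} [NormedAddCommGroup EM] [NormedSpace ℝ EM]
    {HM : Type*} [TopologicalSpace HM] {IM : ModelWithCorners ℝ EM HM}
    {M : Type*} [TopologicalSpace M] [ChartedSpace HM M] [IsManifold IM (⊤ : ℕ∞) M]
    {EG : Type*} [NormedAddCommGroup EG] [NormedSpace ℝ EG]
    {HG : Type*} [TopologicalSpace HG] {IG : ModelWithCorners ℝ EG HG}
    {𝔾 : Type*} [TopologicalSpace 𝔾] [ChartedSpace HG 𝔾] [IsManifold IG (⊤ : ℕ∞) 𝔾]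
    (π : 𝔾 → M) (hπ : ContMDiff IG IM (⊤ : ℕ∞) π)
    (hsub : ∀ g : 𝔾, Function.Surjective (mfderiv IG IM π g))
    (m : 𝔾 → 𝔾 → 𝔾) (i : 𝔾 → 𝔾) (e : M → 𝔾)
    (hm : ContMDiff (IG.prod IG) IG (⊤ : ℕ∞) (Function.uncurry m))
    (hi : ContMDiff IG IG (⊤ : ℕ∞) i) (he : ContMDiff IM IG (⊤ : ℕ∞) e)
    (hπe : ∀ x : M, π (e x) = x)
    (hπm : ∀ g h : 𝔾, π g = π h → π (m g h) = π g)
    (hπi : ∀ g : 𝔾, π (i g) = π g)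
    (hassoc : ∀ g h k : 𝔾, π g = π h → π h = π k → m (m g h) k = m g (m h k))
    (hone : ∀ g : 𝔾, m (e (π g)) g = g ∧ m g (e (π g)) = g)
    (hinv : ∀ g : 𝔾, m g (i g) = e (π g) ∧ m (i g) g = e (π g))
    (x : M) (gg hh : 𝔾) (hggx : π gg = x) (hhhx : π hh = x)
    (sg sh sgh s'g s'h s'gh : M → 𝔾)
    (hsg : ContMDiffAt IM IG (⊤ : ℕ∞) sg x) (hsh : ContMDiffAt IM IG (⊤ : ℕ∞) sh x)
    (hsgh : ContMDiffAt IM IG (⊤ : ℕ∞) sgh x)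
    (hs'g : ContMDiffAt IM IG (⊤ : ℕ∞) s'g x) (hs'h : ContMDiffAt IM IG (⊤ : ℕ∞) s'h x)
    (hs'gh : ContMDiffAt IM IG (⊤ : ℕ∞) s'gh x)
    (hsgs : ∀ᶠ y in nhds x, π (sg y) = y) (hshs : ∀ᶠ y in nhds x, π (sh y) = y)
    (hsghs : ∀ᶠ y in nhds x, π (sgh y) = y)
    (hs'gs : ∀ᶠ y in nhds x, π (s'g y) = y) (hs'hs : ∀ᶠ y in nhds x, π (s'h y) = y)
    (hs'ghs : ∀ᶠ y in nhds x, π (s'gh y) = y)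
    (hsgx : sg x = gg) (hshx : sh x = hh) (hsghx : sgh x = m gg hh)
    (hs'gx : s'g x = gg) (hs'hx : s'h x = hh) (hs'ghx : s'gh x = m gg hh)
    -- `σ` and `σ'` are group bundle morphisms (on the jets involved):
    (hσmul : mfderiv IM IG (fun y => m (sg y) (sh y)) x = mfderiv IM IG sgh x)
    (hσ'mul : mfderiv IM IG (fun y => m (s'g y) (s'h y)) x = mfderiv IM IG s'gh x) :
    ∀ v : TangentSpace IM x,
      id (α := EG) (mfderiv IM IG (fun y => m (sgh y) (i (s'gh y))) x v) -
          id (α := EG) (mfderiv IM IG e x v) =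
        (id (α := EG) (mfderiv IM IG (fun y => m (sg y) (i (s'g y))) x v) -
            id (α := EG) (mfderiv IM IG e x v)) +
          id (α := EG)
            ((mfderiv IG IG (fun k => m (m gg k) (i gg)) (e x))
              (id (α := TangentSpace IG (e x))
                (id (α := EG) (mfderiv IM IG (fun y => m (sh y) (i (s'h y))) x v) -
                  id (α := EG) (mfderiv IM IG e x v)))) := by
  intro v
  -- differentiability of the structure maps
  have dmAt : ∀ q : 𝔾 × 𝔾, MDifferentiableAt (IG.prod IG) IG (Function.uncurry m) q :=
    fun q => (hm q).mdifferentiableAt (by simp)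
  have diAt : ∀ g : 𝔾, MDifferentiableAt IG IG i g := fun g => (hi g).mdifferentiableAt (by simp)
  have deAt : ∀ y : M, MDifferentiableAt IM IG e y := fun y => (he y).mdifferentiableAt (by simp)
  have dsg : MDifferentiableAt IM IG sg x := hsg.mdifferentiableAt (by simp)
  have dsh : MDifferentiableAt IM IG sh x := hsh.mdifferentiableAt (by simp)
  have dsgh : MDifferentiableAt IM IG sgh x := hsgh.mdifferentiableAt (by simp)
  have ds'g : MDifferentiableAt IM IG s'g x := hs'g.mdifferentiableAt (by simp)
  have ds'h : MDifferentiableAt IM IG s'h x := hs'h.mdifferentiableAt (by simp)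
  have ds'gh : MDifferentiableAt IM IG s'gh x := hs'gh.mdifferentiableAt (by simp)
  -- smoothness of Θ(u,w) = m u (i w) and Φ(a,k) = m (m a k) (i a)
  have hΘd : ∀ q : 𝔾 × 𝔾, MDifferentiableAt (IG.prod IG) IG (fun q : 𝔾 × 𝔾 => m q.1 (i q.2)) q := by
    have hΘ : ContMDiff (IG.prod IG) IG (⊤ : ℕ∞) (fun q : 𝔾 × 𝔾 => m q.1 (i q.2)) :=
      hm.comp (contMDiff_fst.prodMk (hi.comp contMDiff_snd))
    exact fun q => (hΘ q).mdifferentiableAt (by simp)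
  have hΦd : ∀ q : 𝔾 × 𝔾,
      MDifferentiableAt (IG.prod IG) IG (fun q : 𝔾 × 𝔾 => m (m q.1 q.2) (i q.1)) q := by
    have hΦ : ContMDiff (IG.prod IG) IG (⊤ : ℕ∞) (fun q : 𝔾 × 𝔾 => m (m q.1 q.2) (i q.1)) :=
      hm.comp (hm.prodMk (hi.comp contMDiff_fst))
    exact fun q => (hΦ q).mdifferentiableAt (by simp)
  -- the general chain rule we use over and over
  have Dchain : ∀ (F : 𝔾 × 𝔾 → 𝔾), (∀ q, MDifferentiableAt (IG.prod IG) IG F q) →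
      ∀ (f g : M → 𝔾) (a b : 𝔾), f x = a → g x = b →
        MDifferentiableAt IM IG f x → MDifferentiableAt IM IG g x →
        mfderiv IM IG (fun z => F (f z, g z)) x
          = (mfderiv (IG.prod IG) IG F (a, b)).comp
              ((mfderiv IM IG f x).prod (mfderiv IM IG g x)) := by
    intro F hF f g a b ha hb hf hg
    subst ha; subst hb
    exact (mfderiv_comp (f := fun z => (f z, g z)) (g := F) x (hF _) (hf.prodMk hg)).trans
      (congrArg (ContinuousLinearMap.comp _) (hf.mfderiv_prod hg))
  -- differentiability of composites
  have dθg : MDifferentiableAt IM IG (fun y => m (sg y) (i (s'g y))) x :=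
    MDifferentiableAt.comp x (dmAt _) (dsg.prodMk (MDifferentiableAt.comp x (diAt _) ds'g))
  have dθh : MDifferentiableAt IM IG (fun y => m (sh y) (i (s'h y))) x :=
    MDifferentiableAt.comp x (dmAt _) (dsh.prodMk (MDifferentiableAt.comp x (diAt _) ds'h))
  have dw : MDifferentiableAt IM IG
      (fun y => m (m (s'g y) (m (sh y) (i (s'h y)))) (i (s'g y))) x :=
    MDifferentiableAt.comp x (dmAt _)
      ((MDifferentiableAt.comp x (dmAt _) (ds'g.prodMk dθh)).prodMk
        (MDifferentiableAt.comp x (diAt _) ds'g))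
  have dmgh : MDifferentiableAt IM IG (fun y => m (sg y) (sh y)) x :=
    MDifferentiableAt.comp x (dmAt _) (dsg.prodMk dsh)
  have dm'gh : MDifferentiableAt IM IG (fun y => m (s'g y) (s'h y)) x :=
    MDifferentiableAt.comp x (dmAt _) (ds'g.prodMk ds'h)
  -- value facts
  have hθgx0 : m (sg x) (i (s'g x)) = e x := by
    rw [hsgx, hs'gx, (hinv gg).1, hggx]
  have hθhx0 : m (sh x) (i (s'h x)) = e x := by
    rw [hshx, hs'hx, (hinv hh).1, hhhx]
  have hggex : m gg (e x) = gg := by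
    have h := (hone gg).2; rwa [hggx] at h
  have hwx0 : m (m (s'g x) (m (sh x) (i (s'h x)))) (i (s'g x)) = e x := by
    rw [hs'gx, hθhx0, hggex, (hinv gg).1, hggx]
  -- eventual section facts
  have hθgs : ∀ᶠ y in nhds x, π (m (sg y) (i (s'g y))) = y := by
    filter_upwards [hsgs, hs'gs] with y h1 h2
    rw [hπm (sg y) (i (s'g y)) (by rw [h1, hπi, h2]), h1]
  have hθhs : ∀ᶠ y in nhds x, π (m (sh y) (i (s'h y))) = y := by
    filter_upwards [hshs, hs'hs] with y h1 h2
    rw [hπm (sh y) (i (s'h y)) (by rw [h1, hπi, h2]), h1]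
  have hws : ∀ᶠ y in nhds x, π (m (m (s'g y) (m (sh y) (i (s'h y)))) (i (s'g y))) = y := by
    filter_upwards [hs'gs, hθhs] with y h1 h2
    have hin : π (m (s'g y) (m (sh y) (i (s'h y)))) = y := by
      rw [hπm (s'g y) _ (by rw [h1, h2]), h1]
    rw [hπm _ (i (s'g y)) (by rw [hin, hπi, h1]), hin]
  -- the key product rule for sections through the identity
  have key : ∀ (u w : M → 𝔾), MDifferentiableAt IM IG u x → MDifferentiableAt IM IG w x →
      (∀ᶠ y in nhds x, π (u y) = y) → (∀ᶠ y in nhds x, π (w y) = y) →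
      u x = e x → w x = e x →
      id (α := EG) (mfderiv IM IG (fun z => m (u z) (w z)) x v)
        = id (α := EG) (mfderiv IM IG u x v) + id (α := EG) (mfderiv IM IG w x v)
            - id (α := EG) (mfderiv IM IG e x v) := by
    intro u w hu hw hus hws' hux hwx
    have e3 : mfderiv IM IG (fun z => m (u z) (w z)) x
        = (mfderiv (IG.prod IG) IG (Function.uncurry m) (e x, e x)).comp
            ((mfderiv IM IG u x).prod (mfderiv IM IG w x)) :=
      Dchain (Function.uncurry m) dmAt u w (e x) (e x) hux hwx hu hw
    have k1 : (mfderiv (IG.prod IG) IG (Function.uncurry m) (e x, e x))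
          (id (α := EG) (mfderiv IM IG u x v), id (α := EG) (mfderiv IM IG e x v))
        = id (α := EG) (mfderiv IM IG u x v) := by
      have e5 : mfderiv IM IG (fun z => m (u z) (e z)) x
          = (mfderiv (IG.prod IG) IG (Function.uncurry m) (e x, e x)).comp
              ((mfderiv IM IG u x).prod (mfderiv IM IG e x)) :=
        Dchain (Function.uncurry m) dmAt u e (e x) (e x) hux rfl hu (deAt x)
      have e4 : (fun z => m (u z) (e z)) =ᶠ[nhds x] u := by
        filter_upwards [hus] with y hy
        calc m (u y) (e y) = m (u y) (e (π (u y))) := by rw [hy]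
          _ = u y := (hone (u y)).2
      exact DFunLike.congr_fun (e5.symm.trans e4.mfderiv_eq) v
    have k2 : (mfderiv (IG.prod IG) IG (Function.uncurry m) (e x, e x))
          (id (α := EG) (mfderiv IM IG e x v), id (α := EG) (mfderiv IM IG w x v))
        = id (α := EG) (mfderiv IM IG w x v) := by
      have e5 : mfderiv IM IG (fun z => m (e z) (w z)) x
          = (mfderiv (IG.prod IG) IG (Function.uncurry m) (e x, e x)).comp
              ((mfderiv IM IG e x).prod (mfderiv IM IG w x)) :=
        Dchain (Function.uncurry m) dmAt e w (e x) (e x) rfl hwx (deAt x) hw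
      have e4 : (fun z => m (e z) (w z)) =ᶠ[nhds x] w := by
        filter_upwards [hws'] with y hy
        calc m (e y) (w y) = m (e (π (w y))) (w y) := by rw [hy]
          _ = w y := (hone (w y)).1
      exact DFunLike.congr_fun (e5.symm.trans e4.mfderiv_eq) v
    have k3 : (mfderiv (IG.prod IG) IG (Function.uncurry m) (e x, e x))
          (id (α := EG) (mfderiv IM IG e x v), id (α := EG) (mfderiv IM IG e x v))
        = id (α := EG) (mfderiv IM IG e x v) := by
      have e5 : mfderiv IM IG (fun z => m (e z) (e z)) x
          = (mfderiv (IG.prod IG) IG (Function.uncurry m) (e x, e x)).comp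
              ((mfderiv IM IG e x).prod (mfderiv IM IG e x)) :=
        Dchain (Function.uncurry m) dmAt e e (e x) (e x) rfl rfl (deAt x) (deAt x)
      have e4 : (fun z => m (e z) (e z)) =ᶠ[nhds x] e := by
        apply Filter.Eventually.of_forall
        intro y
        have h := (hone (e y)).1
        rwa [hπe y] at h
      exact DFunLike.congr_fun (e5.symm.trans e4.mfderiv_eq) v
    have k0 : id (α := EG) (mfderiv IM IG (fun z => m (u z) (w z)) x v)
        = (mfderiv (IG.prod IG) IG (Function.uncurry m) (e x, e x))
            (id (α := EG) (mfderiv IM IG u x v), id (α := EG) (mfderiv IM IG w x v)) :=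
      DFunLike.congr_fun e3 v
    have hsplit : ((id (α := EG) (mfderiv IM IG u x v), id (α := EG) (mfderiv IM IG w x v)) : EG × EG)
        = ((id (α := EG) (mfderiv IM IG u x v), id (α := EG) (mfderiv IM IG e x v)) : EG × EG)
          + ((id (α := EG) (mfderiv IM IG e x v), id (α := EG) (mfderiv IM IG w x v)) : EG × EG)
          - ((id (α := EG) (mfderiv IM IG e x v), id (α := EG) (mfderiv IM IG e x v)) : EG × EG) := by
      simp only [id_eq, Prod.mk_add_mk, Prod.mk_sub_mk, Prod.mk.injEq]
      exact ⟨(add_sub_cancel_right _ _).symm, (add_sub_cancel_left _ _).symm⟩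
    rw [k0, hsplit]
    erw [map_sub, map_add, k1, k2, k3]
    rfl
  -- Step A: replace sgh, s'gh by the products, using the morphism property.
  have e1 : mfderiv IM IG (fun y => m (sgh y) (i (s'gh y))) x
      = (mfderiv (IG.prod IG) IG (fun q : 𝔾 × 𝔾 => m q.1 (i q.2)) (m gg hh, m gg hh)).comp
          ((mfderiv IM IG sgh x).prod (mfderiv IM IG s'gh x)) :=
    Dchain (fun q : 𝔾 × 𝔾 => m q.1 (i q.2)) hΘd sgh s'gh (m gg hh) (m gg hh)
      hsghx hs'ghx dsgh ds'gh
  have e2 : mfderiv IM IG (fun y => m (m (sg y) (sh y)) (i (m (s'g y) (s'h y)))) x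
      = (mfderiv (IG.prod IG) IG (fun q : 𝔾 × 𝔾 => m q.1 (i q.2)) (m gg hh, m gg hh)).comp
          ((mfderiv IM IG (fun y => m (sg y) (sh y)) x).prod
            (mfderiv IM IG (fun y => m (s'g y) (s'h y)) x)) :=
    Dchain (fun q : 𝔾 × 𝔾 => m q.1 (i q.2)) hΘd (fun y => m (sg y) (sh y))
      (fun y => m (s'g y) (s'h y)) (m gg hh) (m gg hh)
      (by show m (sg x) (sh x) = m gg hh; rw [hsgx, hshx])
      (by show m (s'g x) (s'h x) = m gg hh; rw [hs'gx, hs'hx]) dmgh dm'gh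
  have hA : mfderiv IM IG (fun y => m (sgh y) (i (s'gh y))) x
      = mfderiv IM IG (fun y => m (m (sg y) (sh y)) (i (m (s'g y) (s'h y)))) x := by
    rw [e1, e2, hσmul, hσ'mul]
    rfl
  -- Step B: the fiberwise group identity.
  have hB : (fun y => m (m (sg y) (sh y)) (i (m (s'g y) (s'h y)))) =ᶠ[nhds x]
      (fun y => m (m (sg y) (i (s'g y)))
        (m (m (s'g y) (m (sh y) (i (s'h y)))) (i (s'g y)))) := by
    filter_upwards [hsgs, hshs, hs'gs, hs'hs] with y h1 h2 h3 h4
    exact fiber_group_identity π m i e hπe hπm hπi hassoc hone hinv y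
      (sg y) (sh y) (s'g y) (s'h y) h1 h2 h3 h4
  -- Step C: apply the product rule.
  have hABC : id (α := EG) (mfderiv IM IG (fun y => m (sgh y) (i (s'gh y))) x v)
      = id (α := EG) (mfderiv IM IG (fun y => m (sg y) (i (s'g y))) x v)
        + id (α := EG)
            (mfderiv IM IG (fun y => m (m (s'g y) (m (sh y) (i (s'h y)))) (i (s'g y))) x v)
        - id (α := EG) (mfderiv IM IG e x v) := by
    have hkey := key (fun y => m (sg y) (i (s'g y)))
      (fun y => m (m (s'g y) (m (sh y) (i (s'h y)))) (i (s'g y)))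
      dθg dw hθgs hws hθgx0 hwx0
    rw [hA, hB.mfderiv_eq]
    exact hkey
  -- Step D: the conjugation part.
  have e6 : mfderiv IM IG (fun y => m (m (s'g y) (m (sh y) (i (s'h y)))) (i (s'g y))) x
      = (mfderiv (IG.prod IG) IG (fun q : 𝔾 × 𝔾 => m (m q.1 q.2) (i q.1)) (gg, e x)).comp
          ((mfderiv IM IG s'g x).prod (mfderiv IM IG (fun y => m (sh y) (i (s'h y))) x)) :=
    Dchain (fun q : 𝔾 × 𝔾 => m (m q.1 q.2) (i q.1)) hΦd s'g
      (fun y => m (sh y) (i (s'h y))) gg (e x) hs'gx hθhx0 ds'g dθh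
  have k4 : (mfderiv (IG.prod IG) IG (fun q : 𝔾 × 𝔾 => m (m q.1 q.2) (i q.1)) (gg, e x))
        (id (α := EG) (mfderiv IM IG s'g x v), id (α := EG) (mfderiv IM IG e x v))
      = id (α := EG) (mfderiv IM IG e x v) := by
    have e8 : mfderiv IM IG (fun y => m (m (s'g y) (e y)) (i (s'g y))) x
        = (mfderiv (IG.prod IG) IG (fun q : 𝔾 × 𝔾 => m (m q.1 q.2) (i q.1)) (gg, e x)).comp
            ((mfderiv IM IG s'g x).prod (mfderiv IM IG e x)) :=
      Dchain (fun q : 𝔾 × 𝔾 => m (m q.1 q.2) (i q.1)) hΦd s'g e gg (e x)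
        hs'gx rfl ds'g (deAt x)
    have e7 : (fun y => m (m (s'g y) (e y)) (i (s'g y))) =ᶠ[nhds x] e := by
      filter_upwards [hs'gs] with y hy
      calc m (m (s'g y) (e y)) (i (s'g y))
          = m (m (s'g y) (e (π (s'g y)))) (i (s'g y)) := by rw [hy]
        _ = m (s'g y) (i (s'g y)) := by rw [(hone (s'g y)).2]
        _ = e y := by rw [(hinv (s'g y)).1, hy]
    exact DFunLike.congr_fun (e8.symm.trans e7.mfderiv_eq) v
  have k5 : ∀ η : EG, (mfderiv IG IG (fun k => m (m gg k) (i gg)) (e x)) η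
      = (mfderiv (IG.prod IG) IG (fun q : 𝔾 × 𝔾 => m (m q.1 q.2) (i q.1)) (gg, e x))
          ((0 : EG), η) := by
    intro η
    have e9a : mfderiv IG IG (fun k => m (m gg k) (i gg)) (e x)
        = (mfderiv (IG.prod IG) IG (fun q : 𝔾 × 𝔾 => m (m q.1 q.2) (i q.1)) (gg, e x)).comp
            (mfderiv IG (IG.prod IG) (fun k : 𝔾 => (gg, k)) (e x)) :=
      mfderiv_comp (f := fun k : 𝔾 => (gg, k))
        (g := fun q : 𝔾 × 𝔾 => m (m q.1 q.2) (i q.1)) (e x) (hΦd _)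
        ((mdifferentiableAt_const).prodMk mdifferentiableAt_id)
    have e9b : mfderiv IG (IG.prod IG) (fun k : 𝔾 => (gg, k)) (e x)
        = ContinuousLinearMap.prod (0 : EG →L[ℝ] EG) (ContinuousLinearMap.id ℝ EG) := by
      have h := (mdifferentiableAt_const (I := IG) (I' := IG) (c := gg)
        (x := e x)).mfderiv_prod (mdifferentiableAt_id (I := IG) (x := e x))
      rw [mfderiv_const, mfderiv_id] at h
      exact h
    rw [e9a, e9b]
    rfl
  have e10 : id (α := EG) (mfderiv IM IG
        (fun y => m (m (s'g y) (m (sh y) (i (s'h y)))) (i (s'g y))) x v)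
      = (mfderiv (IG.prod IG) IG (fun q : 𝔾 × 𝔾 => m (m q.1 q.2) (i q.1)) (gg, e x))
          (id (α := EG) (mfderiv IM IG s'g x v),
            id (α := EG) (mfderiv IM IG (fun y => m (sh y) (i (s'h y))) x v)) :=
    DFunLike.congr_fun e6 v
  have hsplit2 : ((id (α := EG) (mfderiv IM IG s'g x v),
        id (α := EG) (mfderiv IM IG (fun y => m (sh y) (i (s'h y))) x v)) : EG × EG)
      = ((id (α := EG) (mfderiv IM IG s'g x v), id (α := EG) (mfderiv IM IG e x v)) : EG × EG)
        + (((0 : EG), id (α := EG) (mfderiv IM IG (fun y => m (sh y) (i (s'h y))) x v)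
            - id (α := EG) (mfderiv IM IG e x v)) : EG × EG) := by
    simp only [id_eq, Prod.mk_add_mk, Prod.mk.injEq]
    exact ⟨(add_zero _).symm, (add_sub_cancel _ _).symm⟩
  have hD : id (α := EG) (mfderiv IM IG
        (fun y => m (m (s'g y) (m (sh y) (i (s'h y)))) (i (s'g y))) x v)
      = id (α := EG) (mfderiv IM IG e x v)
        + id (α := EG)
            ((mfderiv IG IG (fun k => m (m gg k) (i gg)) (e x))
              (id (α := TangentSpace IG (e x))
                (id (α := EG) (mfderiv IM IG (fun y => m (sh y) (i (s'h y))) x v) -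
                  id (α := EG) (mfderiv IM IG e x v)))) := by
    rw [e10, hsplit2]
    erw [map_add, k4, k5]
    rfl
  rw [hABC, hD]
  abel
end
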